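/- Let (M,d) be a metric space and (x_n) a sequence in M such that lim_{n→∞} d(x_n, x_{n+1}) = 0. If (x_n) is not a Cauchy sequence in M, then there exist ε₀ > 0 and strictly increasing sequences of positive integers (m(k)) and (n(k)) with m(k) > n(k) > k for all k, such that d(x_{m(k)}, x_{n(k)}) ≥ ε₀ and d(x_{m(k)−1}, x_{n(k)}) < ε₀ for all k, and moreover (i) lim_{k→∞} d(x_{m(k)−1}, x_{n(k)+1}) = ε₀, (ii) lim_{k→∞} d(x_{m(k)}, x_{n(k)}) = ε₀, and (iii) lim_{k→∞} d(x_{m(k)−1}, x_{n(k)}) = ε₀. -/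

import Mathlib

open Filter Topology

/-- Lemma of Babu and Sailaja: if `(x_n)` satisfies `d(x_n, x_{n+1}) → 0` but is not a Cauchy
sequence, then there exist `ε₀ > 0` and strictly increasing sequences of positive integers
`m(k) > n(k) > k` with `d(x_{m(k)}, x_{n(k)}) ≥ ε₀`, `d(x_{m(k)-1}, x_{n(k)}) < ε₀`, and the
three stated limits all equal `ε₀`. -/
theorem not_cauchy_of_dist_succ_tendsto_zero {M : Type*} [MetricSpace M] (x : ℕ → M)
    (hdist : Tendsto (fun n => dist (x n) (x (n + 1))) atTop (𝓝 0))
    (hnotCauchy : ¬ CauchySeq x) :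
    ∃ ε₀ > (0:ℝ), ∃ m n : ℕ → ℕ,
      StrictMono m ∧ StrictMono n ∧
      (∀ k, m k > n k ∧ n k > k) ∧
      (∀ k, dist (x (m k)) (x (n k)) ≥ ε₀) ∧
      (∀ k, dist (x (m k - 1)) (x (n k)) < ε₀) ∧
      Tendsto (fun k => dist (x (m k - 1)) (x (n k + 1))) atTop (𝓝 ε₀) ∧
      Tendsto (fun k => dist (x (m k)) (x (n k))) atTop (𝓝 ε₀) ∧
      Tendsto (fun k => dist (x (m k - 1)) (x (n k))) atTop (𝓝 ε₀) := by
  classical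
  rw [Metric.cauchySeq_iff] at hnotCauchy
  push_neg at hnotCauchy
  obtain ⟨ε₀, hε₀, hbad⟩ := hnotCauchy
  -- normalize the bad pairs: for every N there is a ≥ N and b > a with ε₀ ≤ dist (x b) (x a)
  have H : ∀ N : ℕ, ∃ a, N ≤ a ∧ ∃ b, a < b ∧ ε₀ ≤ dist (x b) (x a) := by
    intro N
    obtain ⟨p, hp, q, hq, hd⟩ := hbad N
    rcases lt_trichotomy p q with h | h | h
    · exact ⟨p, hp, q, h, by rwa [dist_comm]⟩
    · exfalso; rw [h, dist_self] at hd; linarith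
    · exact ⟨q, hq, p, h, hd⟩
  choose g hg1 b hb1 hb2 using H
  have Q : ∀ N : ℕ, ∃ m, g N < m ∧ ε₀ ≤ dist (x m) (x (g N)) :=
    fun N => ⟨b N, hb1 N, hb2 N⟩
  -- minimal bad index beyond g N
  set mo : ℕ → ℕ := fun N => Nat.find (Q N) with hmo
  have ho : ∀ N, g N < mo N ∧ ε₀ ≤ dist (x (mo N)) (x (g N)) := fun N => Nat.find_spec (Q N)
  have homin : ∀ N j, j < mo N → ¬ (g N < j ∧ ε₀ ≤ dist (x j) (x (g N))) :=
    fun N j hj => Nat.find_min (Q N) hj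
  -- the sequence of thresholds
  set Ns : ℕ → ℕ := fun k => Nat.rec 1 (fun k Nk => max (mo Nk) (k + 1) + 1) k with hNs
  set nn : ℕ → ℕ := fun k => g (Ns k) with hnn
  set mm : ℕ → ℕ := fun k => mo (Ns k) with hmm
  have hNsk : ∀ k, k + 1 ≤ Ns k := by
    intro k
    cases k with
    | zero => exact le_refl 1
    | succ k => exact Nat.succ_le_succ (le_max_right _ _)
  have hA : ∀ k, nn k < mm k := fun k => (ho (Ns k)).1
  have hB : ∀ k, ε₀ ≤ dist (x (mm k)) (x (nn k)) := fun k => (ho (Ns k)).2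
  have hnk : ∀ k, k < nn k := fun k => lt_of_lt_of_le (Nat.lt_succ_self k)
    (le_trans (hNsk k) (hg1 (Ns k)))
  have hC : ∀ k, dist (x (mm k - 1)) (x (nn k)) < ε₀ := by
    intro k
    have h1 : nn k ≤ mm k - 1 := Nat.le_sub_one_of_lt (hA k)
    rcases eq_or_lt_of_le h1 with h | h
    · rw [← h, dist_self]; exact hε₀
    · have hj : mm k - 1 < mm k := Nat.sub_lt (Nat.zero_lt_of_lt (hA k)) one_pos
      have := homin (Ns k) (mm k - 1) hj
      by_contra hcontra
      push_neg at hcontra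
      exact this ⟨h, hcontra⟩
  -- strict monotonicity
  have hstep : ∀ k, mm k < nn (k + 1) := by
    intro k
    have : Ns (k + 1) = max (mm k) (k + 1) + 1 := rfl
    calc mm k ≤ max (mm k) (k + 1) := le_max_left _ _
      _ < Ns (k + 1) := by rw [this]; exact Nat.lt_succ_self _
      _ ≤ nn (k + 1) := hg1 _
  have hnmono : StrictMono nn :=
    strictMono_nat_of_lt_succ (fun k => lt_trans (hA k) (hstep k))
  have hmmono : StrictMono mm :=
    strictMono_nat_of_lt_succ (fun k => lt_trans (hstep k) (hA (k + 1)))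
  -- auxiliary limits
  have hmm1 : ∀ k, mm k - 1 + 1 = mm k := fun k =>
    Nat.succ_pred_eq_of_pos (Nat.zero_lt_of_lt (hA k))
  have hle1 : ∀ k, k ≤ mm k - 1 := fun k =>
    le_trans (le_of_lt (hnk k)) (Nat.le_sub_one_of_lt (hA k))
  have hf1 : Tendsto (fun k => dist (x (mm k - 1)) (x (mm k))) atTop (𝓝 0) := by
    have : Tendsto (fun k => mm k - 1) atTop atTop :=
      tendsto_atTop_mono hle1 tendsto_id
    refine (hdist.comp this).congr fun k => ?_
    simp only [Function.comp_apply]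
    rw [hmm1 k]
  have hf2 : Tendsto (fun k => dist (x (nn k)) (x (nn k + 1))) atTop (𝓝 0) := by
    have : Tendsto nn atTop atTop := tendsto_atTop_mono (fun k => le_of_lt (hnk k)) tendsto_id
    exact hdist.comp this
  -- limit (ii)
  have hii : Tendsto (fun k => dist (x (mm k)) (x (nn k))) atTop (𝓝 ε₀) := by
    apply tendsto_of_tendsto_of_tendsto_of_le_of_le (tendsto_const_nhds)
      (by simpa using hf1.add (tendsto_const_nhds (x := ε₀)))
    · exact hB
    · intro k
      calc dist (x (mm k)) (x (nn k))
          ≤ dist (x (mm k)) (x (mm k - 1)) + dist (x (mm k - 1)) (x (nn k)) := dist_triangle _ _ _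
        _ ≤ dist (x (mm k - 1)) (x (mm k)) + ε₀ := by
            rw [dist_comm]; exact add_le_add_right (le_of_lt (hC k)) _
  -- limit (iii)
  have hiii : Tendsto (fun k => dist (x (mm k - 1)) (x (nn k))) atTop (𝓝 ε₀) := by
    apply tendsto_of_tendsto_of_tendsto_of_le_of_le
      (by simpa using (tendsto_const_nhds (x := ε₀)).sub hf1) (tendsto_const_nhds)
    · intro k
      have ht : dist (x (mm k)) (x (nn k)) ≤
          dist (x (mm k)) (x (mm k - 1)) + dist (x (mm k - 1)) (x (nn k)) := dist_triangle _ _ _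
      have hb := hB k
      rw [dist_comm (x (mm k)) (x (mm k - 1))] at ht
      dsimp only
      linarith
    · exact fun k => le_of_lt (hC k)
  -- limit (i)
  have hi : Tendsto (fun k => dist (x (mm k - 1)) (x (nn k + 1))) atTop (𝓝 ε₀) := by
    apply tendsto_of_tendsto_of_tendsto_of_le_of_le
      (by simpa using hiii.sub hf2) (by simpa using hiii.add hf2)
    · intro k
      have ht : dist (x (mm k - 1)) (x (nn k)) ≤
          dist (x (mm k - 1)) (x (nn k + 1)) + dist (x (nn k + 1)) (x (nn k)) :=
        dist_triangle _ _ _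
      rw [dist_comm (x (nn k + 1)) (x (nn k))] at ht
      dsimp only
      linarith
    · intro k
      exact dist_triangle _ _ _
  exact ⟨ε₀, hε₀, mm, nn, hmmono, hnmono, fun k => ⟨hA k, hnk k⟩, hB, hC, hi, hii, hiii⟩
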